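/- Let ν ∈ ℕ^m be a count vector with n = Σ_i ν_i ≥ 1, and let ν_{i₁}, …, ν_{i_k} (k ≥ 1) be its nonzero entries. Define S(ν) = √n / ( (2π)^{(k−1)/2} · √(ν_{i₁}·ν_{i₂}⋯ν_{i_k}) ). Then e^{−k/12} · S(ν) · e^{G(ν)} ≤ n!/∏_i ν_i! ≤ S(ν) · e^{G(ν)}; that is, the number of realizations of ν (its multinomial coefficient) is bounded above and below in terms of its generalized entropy. -/

import Mathlib

open Real Filter

lemma logRatio_bound {t : ℝ} (ht : 0 < t) (ht3 : t ≤ 1/3) :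
    |Real.log ((1+t)/(1-t)) - 2*(t + t^3/3 + t^5/5)| ≤ 2*t^7/(1-t) := by
  have h1 : |t| < 1 := by rw [abs_of_pos ht]; linarith
  have h2 : |(-t)| < 1 := by rw [abs_neg]; exact h1
  have A := Real.abs_log_sub_add_sum_range_le h1 6
  have B := Real.abs_log_sub_add_sum_range_le h2 6
  rw [abs_of_pos ht] at A
  rw [abs_neg, abs_of_pos ht] at B
  norm_num [Finset.sum_range_succ] at A B
  have hlog : Real.log ((1+t)/(1-t)) = Real.log (1+t) - Real.log (1-t) := by
    rw [Real.log_div (by positivity) (ne_of_gt (by linarith))]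
  calc |Real.log ((1 + t) / (1 - t)) - 2 * (t + t ^ 3 / 3 + t ^ 5 / 5)|
      = |(-t + t ^ 2 / 2 + (-t) ^ 3 / 3 + t ^ 4 / 4 + (-t) ^ 5 / 5 + t ^ 6 / 6 + Real.log (1 + t))
        - (t + t ^ 2 / 2 + t ^ 3 / 3 + t ^ 4 / 4 + t ^ 5 / 5 + t ^ 6 / 6 + Real.log (1 - t))| := by
        rw [hlog]; ring_nf
    _ ≤ _ := abs_sub _ _
    _ ≤ t^7/(1-t) + t^7/(1-t) := add_le_add B A
    _ = 2*t^7/(1-t) := by ring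


lemma poly_hi {t : ℝ} (ht : 0 < t) (ht3 : t ≤ 1/3) :
    0 ≤ 2 - 2*t - 12*t^2 - 3*t^3 + 15*t^4 := by
  nlinarith [mul_nonneg (sub_nonneg.2 ht3) ht.le, sq_nonneg (t - 1/3),
    mul_nonneg (mul_nonneg (sub_nonneg.2 ht3) ht.le) ht.le,
    mul_nonneg (sub_nonneg.2 ht3) (sq_nonneg t), sq_nonneg t]

lemma poly_lo {t : ℝ} (ht : 0 < t) (ht3 : t ≤ 1/3) :
    0 ≤ 60 - 127*t + 103*t^2 - 681*t^3 - 75*t^4 + 525*t^5 := by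
  nlinarith [mul_nonneg (sub_nonneg.2 ht3) (sq_nonneg t),
    mul_nonneg (sub_nonneg.2 ht3) (by linarith : (0:ℝ) ≤ 1/3 + t),
    mul_nonneg (mul_nonneg (sub_nonneg.2 ht3) ht.le) (sq_nonneg t),
    pow_nonneg ht.le 5, pow_nonneg ht.le 4, pow_nonneg ht.le 3, sq_nonneg t]

lemma tineq_hi {t : ℝ} (ht : 0 < t) (ht3 : t ≤ 1/3) :
    t^2/3 + t^4/5 + t^6/(1-t) ≤ t^2/(3*(1-t^2)) := by
  have h1 : (0:ℝ) < 1 - t := by linarith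
  have h2 : (0:ℝ) < 1 - t^2 := by nlinarith
  rw [← sub_nonneg]
  have key : t^2/(3*(1-t^2)) - (t^2/3 + t^4/5 + t^6/(1-t))
      = t^4*(2 - 2*t - 12*t^2 - 3*t^3 + 15*t^4) / (15*(1-t^2)*(1-t)) := by
    field_simp
    ring
  rw [key]
  apply div_nonneg (mul_nonneg (pow_nonneg ht.le 4) (poly_hi ht ht3)) (by positivity)

lemma tineq_lo {t : ℝ} (ht : 0 < t) (ht3 : t ≤ 1/3) :
    12*t^2/((6-5*t)*(6+7*t)) ≤ t^2/3 + t^4/5 - t^6/(1-t) := by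
  have h1 : (0:ℝ) < 1 - t := by linarith
  have h5 : (0:ℝ) < 6 - 5*t := by linarith
  have h7 : (0:ℝ) < 6 + 7*t := by linarith
  rw [← sub_nonneg]
  have key : t^2/3 + t^4/5 - t^6/(1-t) - 12*t^2/((6-5*t)*(6+7*t))
      = t^3*(60 - 127*t + 103*t^2 - 681*t^3 - 75*t^4 + 525*t^5)
        / (15*(1-t)*((6-5*t)*(6+7*t))) := by
    rw [div_add_div _ _ (by norm_num) (by norm_num), div_sub_div _ _ (by positivity) h1.ne', div_sub_div _ _ (by positivity) (by positivity), div_eq_div_iff (by positivity) (by positivity)]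
    ring
  rw [key]
  apply div_nonneg (mul_nonneg (pow_nonneg ht.le 3) (poly_lo ht ht3)) (by positivity)

set_option maxHeartbeats 1000000 in

lemma g_bounds {x : ℝ} (hx : 1 ≤ x) :
    1/(12*x+1) - 1/(12*x+13) ≤ (x + 1/2) * Real.log ((x+1)/x) - 1 ∧
    (x + 1/2) * Real.log ((x+1)/x) - 1 ≤ 1/(12*x) - 1/(12*x+12) := by
  have hx0 : 0 < x := by linarith
  set t : ℝ := 1/(2*x+1) with htdef
  have ht : 0 < t := by positivity
  have ht3 : t ≤ 1/3 := by
    rw [htdef, div_le_div_iff₀ (by linarith) (by norm_num)]; linarith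
  have htx : t * (2*x+1) = 1 := by rw [htdef]; field_simp
  have h1t : 0 < 1 - t := by linarith
  have hratio : (x+1)/x = (1+t)/(1-t) := by
    rw [div_eq_div_iff hx0.ne' h1t.ne']; nlinarith [htx]
  have hb := logRatio_bound ht ht3
  rw [← hratio] at hb
  obtain ⟨hlo, hhi⟩ := abs_le.mp hb
  have hxt2 : x + 1/2 = 1/(2*t) := by rw [htdef]; field_simp
  have idlo : (x+1/2)*(2*(t+t^3/3+t^5/5) - 2*t^7/(1-t)) - 1
      = t^2/3+t^4/5-t^6/(1-t) := by
    rw [hxt2]; field_simp; ring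
  have idhi : (x+1/2)*(2*(t+t^3/3+t^5/5) + 2*t^7/(1-t)) - 1
      = t^2/3+t^4/5+t^6/(1-t) := by
    rw [hxt2]; field_simp; ring
  have hxhalf : (0:ℝ) < x + 1/2 := by linarith
  have idrlo : 1/(12*x+1) - 1/(12*x+13) = 12*t^2/((6-5*t)*(6+7*t)) := by
    rw [htdef]
    rw [div_sub_div _ _ (ne_of_gt (by linarith : (0:ℝ) < 12*x+1))
      (ne_of_gt (by linarith : (0:ℝ) < 12*x+13))]
    rw [div_eq_div_iff (by nlinarith) (by nlinarith [ht, ht3])]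
    field_simp
    ring
  have idrhi : 1/(12*x) - 1/(12*x+12) = t^2/(3*(1-t^2)) := by
    rw [htdef]
    rw [div_sub_div _ _ (ne_of_gt (by linarith : (0:ℝ) < 12*x))
      (ne_of_gt (by linarith : (0:ℝ) < 12*x+12))]
    rw [div_eq_div_iff (by nlinarith) (by nlinarith [ht, h1t])]
    field_simp
    ring
  constructor
  · have step : (x+1/2)*(2*(t+t^3/3+t^5/5) - 2*t^7/(1-t)) ≤ (x+1/2) * Real.log ((x+1)/x) :=
      mul_le_mul_of_nonneg_left (by linarith) hxhalf.le
    rw [idrlo]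
    have := tineq_lo ht ht3
    linarith [idlo]
  · have step : (x+1/2) * Real.log ((x+1)/x) ≤ (x+1/2)*(2*(t+t^3/3+t^5/5) + 2*t^7/(1-t)) :=
      mul_le_mul_of_nonneg_left (by linarith) hxhalf.le
    rw [idrhi]
    have := tineq_hi ht ht3
    linarith [idhi]

noncomputable def dSeq (n : ℕ) : ℝ := Real.log (Nat.factorial n) - ((n:ℝ) + 1/2) * Real.log n + n

lemma dSeq_diff {n : ℕ} (hn : 1 ≤ n) :
    dSeq n - dSeq (n+1) = ((n:ℝ) + 1/2) * Real.log (((n:ℝ)+1)/n) - 1 := by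
  have hn0 : (0:ℝ) < n := by exact_mod_cast hn
  have hfn : ((Nat.factorial n : ℕ):ℝ) ≠ 0 := Nat.cast_ne_zero.mpr (Nat.factorial_ne_zero n)
  have h1 : ((n:ℝ)+1) ≠ 0 := by positivity
  have hfac : Real.log ((Nat.factorial (n+1) : ℕ)) = Real.log ((n:ℝ)+1) + Real.log ((Nat.factorial n : ℕ)) := by
    rw [Nat.factorial_succ]
    push_cast
    rw [Real.log_mul h1 hfn]
  have hlogdiv : Real.log (((n:ℝ)+1)/n) = Real.log ((n:ℝ)+1) - Real.log n :=
    Real.log_div h1 hn0.ne'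
  simp only [dSeq, Nat.cast_add, Nat.cast_one, hfac, hlogdiv]
  ring

lemma dSeq_tendsto :
    Filter.Tendsto dSeq Filter.atTop (nhds (Real.log (Real.sqrt (2*Real.pi)))) := by
  have h1 : Filter.Tendsto (fun n => Real.log (Stirling.stirlingSeq n) + 1/2 * Real.log 2)
      Filter.atTop (nhds (Real.log (Real.sqrt Real.pi) + 1/2 * Real.log 2)) :=
    (((Real.continuousAt_log (by positivity)).tendsto).comp
      Stirling.tendsto_stirlingSeq_sqrt_pi).add_const _
  have h2 : Real.log (Real.sqrt Real.pi) + 1/2 * Real.log 2 = Real.log (Real.sqrt (2*Real.pi)) := by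
    rw [Real.log_sqrt Real.pi_pos.le, Real.log_sqrt (by positivity),
      Real.log_mul (by norm_num) Real.pi_ne_zero]
    ring
  rw [h2] at h1
  apply h1.congr'
  filter_upwards [Filter.eventually_ge_atTop 1] with n hn
  have hn0 : (0:ℝ) < n := by exact_mod_cast hn
  rw [Stirling.log_stirlingSeq_formula, dSeq,
    Real.log_mul (by norm_num : (2:ℝ) ≠ 0) hn0.ne',
    Real.log_div hn0.ne' (Real.exp_ne_zero 1), Real.log_exp]
  ring

noncomputable def aSeq (n : ℕ) : ℝ := dSeq n - 1/(12*(n:ℝ))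
noncomputable def bSeq (n : ℕ) : ℝ := dSeq n - 1/(12*(n:ℝ)+1)

lemma dSeq_bounds {n : ℕ} (hn : 1 ≤ n) :
    Real.log (Real.sqrt (2*Real.pi)) + 1/(12*(n:ℝ)+1) ≤ dSeq n ∧
    dSeq n ≤ Real.log (Real.sqrt (2*Real.pi)) + 1/(12*(n:ℝ)) := by
  have hmono : ∀ p q : ℕ, 1 ≤ p → p ≤ q → aSeq p ≤ aSeq q ∧ bSeq q ≤ bSeq p := by
    intro p q hp hpq
    induction q, hpq using Nat.le_induction with
    | base => exact ⟨le_refl _, le_refl _⟩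
    | succ q hpq ih =>
      have hq1 : 1 ≤ q := le_trans hp hpq
      have hq0 : (1:ℝ) ≤ q := by exact_mod_cast hq1
      have hg := g_bounds hq0
      have hd := dSeq_diff hq1
      constructor
      · refine le_trans ih.1 ?_
        simp only [aSeq, Nat.cast_add, Nat.cast_one]
        have h12 : (12:ℝ)*((q:ℝ)+1) = 12*(q:ℝ)+12 := by ring
        rw [h12]
        linarith [hg.2, hd]
      · refine le_trans ?_ ih.2
        simp only [bSeq, Nat.cast_add, Nat.cast_one]
        have h13 : (12:ℝ)*((q:ℝ)+1)+1 = 12*(q:ℝ)+13 := by ring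
        rw [h13]
        linarith [hg.1, hd]
  have hz1 : Filter.Tendsto (fun n : ℕ => 1/(12*(n:ℝ))) Filter.atTop (nhds 0) := by
    apply Filter.Tendsto.div_atTop (tendsto_const_nhds)
    exact Filter.Tendsto.const_mul_atTop (by norm_num) tendsto_natCast_atTop_atTop
  have hz2 : Filter.Tendsto (fun n : ℕ => 1/(12*(n:ℝ)+1)) Filter.atTop (nhds 0) := by
    apply Filter.Tendsto.div_atTop (tendsto_const_nhds)
    apply Filter.tendsto_atTop_add_const_right
    exact Filter.Tendsto.const_mul_atTop (by norm_num) tendsto_natCast_atTop_atTop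
  have haL : Filter.Tendsto aSeq Filter.atTop (nhds (Real.log (Real.sqrt (2*Real.pi)))) := by
    have h0 := dSeq_tendsto.sub hz1
    rw [sub_zero] at h0
    exact h0
  have hbL : Filter.Tendsto bSeq Filter.atTop (nhds (Real.log (Real.sqrt (2*Real.pi)))) := by
    have h0 := dSeq_tendsto.sub hz2
    rw [sub_zero] at h0
    exact h0
  constructor
  · have hb : Real.log (Real.sqrt (2*Real.pi)) ≤ bSeq n := by
      apply le_of_tendsto hbL
      filter_upwards [Filter.eventually_ge_atTop n] with q hq
      exact (hmono n q hn hq).2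
    simp only [bSeq] at hb
    linarith
  · have ha : aSeq n ≤ Real.log (Real.sqrt (2*Real.pi)) := by
      apply ge_of_tendsto haL
      filter_upwards [Filter.eventually_ge_atTop n] with q hq
      exact (hmono n q hn hq).1
    simp only [aSeq] at ha
    linarith



open scoped BigOperators

/-- Generalized entropy `G(x) = -∑ xᵢ ln xᵢ + (∑ xᵢ) ln (∑ xᵢ)`
(with the convention `0 ln 0 = 0`, automatic since `Real.log 0 = 0`). -/
noncomputable def genEntropy {m : ℕ} (x : Fin m → ℝ) : ℝ :=
  -(∑ i, x i * Real.log (x i)) + (∑ i, x i) * Real.log (∑ i, x i)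

/-- Stirling bounds on the number of realizations of a count vector: with
`k` the number of nonzero entries of `ν`, `n = ∑ νᵢ ≥ 1`, and
`S(ν) = √n / ((2π)^{(k−1)/2} √(ν_{i₁}⋯ν_{i_k}))`,
`e^{−k/12} S(ν) e^{G(ν)} ≤ n!/∏ νᵢ! ≤ S(ν) e^{G(ν)}`. -/
theorem stmt16 {m : ℕ} (ν : Fin m → ℕ) (n : ℕ) (hn : n = ∑ i, ν i)
    (hn1 : 1 ≤ n) :
    let supp : Finset (Fin m) := Finset.univ.filter fun i => ν i ≠ 0
    let k : ℕ := supp.card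
    let S : ℝ := Real.sqrt n /
      ((2 * Real.pi) ^ (((k : ℝ) - 1) / 2) * Real.sqrt (∏ i ∈ supp, (ν i : ℝ)))
    Real.exp (-(k : ℝ) / 12) * S * Real.exp (genEntropy fun i => (ν i : ℝ)) ≤
        (Nat.multinomial Finset.univ ν : ℝ) ∧
      (Nat.multinomial Finset.univ ν : ℝ) ≤
        S * Real.exp (genEntropy fun i => (ν i : ℝ)) := by
  intro supp k S
  classical
  set L : ℝ := Real.log (Real.sqrt (2*Real.pi)) with hLdef
  set G : ℝ := genEntropy fun i => (ν i : ℝ) with hGdef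
  set M : ℕ := Nat.multinomial Finset.univ ν with hMdef
  have hLval : L = Real.log (2*Real.pi) / 2 := Real.log_sqrt (by positivity)
  have hsupp_sum : ∑ i ∈ supp, ν i = n := by
    rw [hn]
    exact Finset.sum_filter_ne_zero _
  have hνpos : ∀ i ∈ supp, 1 ≤ ν i := fun i hi =>
    Nat.one_le_iff_ne_zero.mpr (Finset.mem_filter.mp hi).2
  have hνle : ∀ i ∈ supp, ν i ≤ n := fun i hi => by
    rw [← hsupp_sum]
    exact Finset.single_le_sum (fun j _ => Nat.zero_le _) hi
  have hk1 : 1 ≤ k := by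
    rw [show k = supp.card from rfl, Nat.one_le_iff_ne_zero, ← Nat.pos_iff_ne_zero,
      Finset.card_pos]
    by_contra hne
    rw [Finset.not_nonempty_iff_eq_empty] at hne
    have : (0:ℕ) = n := by rw [← hsupp_sum, hne, Finset.sum_empty]
    omega
  have hn0 : (0:ℝ) < n := by exact_mod_cast hn1
  have hP : (0:ℝ) < ∏ i ∈ supp, (ν i : ℝ) :=
    Finset.prod_pos fun i hi => by exact_mod_cast hνpos i hi
  have hS : 0 < S := by
    apply div_pos (Real.sqrt_pos.mpr hn0)
    exact mul_pos (Real.rpow_pos_of_pos (by positivity) _) (Real.sqrt_pos.mpr hP)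
  have hM1 : 1 ≤ M := Nat.multinomial_pos _ _
  have hM0 : (0:ℝ) < M := by exact_mod_cast hM1
  -- log S
  have hlogS : Real.log S = Real.log n / 2 - (((k:ℝ)-1)/2) * Real.log (2*Real.pi)
      - (∑ i ∈ supp, Real.log (ν i)) / 2 := by
    rw [show S = Real.sqrt n /
      ((2 * Real.pi) ^ (((k : ℝ) - 1) / 2) * Real.sqrt (∏ i ∈ supp, (ν i : ℝ))) from rfl]
    rw [Real.log_div (Real.sqrt_pos.mpr hn0).ne' (by positivity),
      Real.log_mul (Real.rpow_pos_of_pos (by positivity) _).ne' (Real.sqrt_pos.mpr hP).ne',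
      Real.log_rpow (by positivity), Real.log_sqrt hn0.le, Real.log_sqrt hP.le,
      Real.log_prod (fun i hi => by
        have := hνpos i hi; positivity)]
    ring
  -- entropy over support
  have hsum_cast : ∑ i, (ν i : ℝ) = (n:ℝ) := by rw [hn]; push_cast; rfl
  have hA : ∑ i ∈ supp, (ν i:ℝ) * Real.log (ν i) = ∑ i, (ν i:ℝ) * Real.log (ν i) := by
    apply Finset.sum_filter_of_ne
    intro x _ hx h0
    apply hx
    rw [h0]; simp
  have hGval : G = -(∑ i ∈ supp, (ν i:ℝ) * Real.log (ν i)) + (n:ℝ) * Real.log n := by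
    rw [hGdef, genEntropy, hA, hsum_cast]
  -- log M
  have hlogM : Real.log (M:ℝ) = Real.log (Nat.factorial n)
      - ∑ i ∈ supp, Real.log (Nat.factorial (ν i)) := by
    have spec := Nat.multinomial_spec Finset.univ ν
    have spec' : ((∏ i, Nat.factorial (ν i) : ℕ):ℝ) * (M:ℝ) = ((Nat.factorial n : ℕ):ℝ) := by
      rw [hn]
      exact_mod_cast congrArg (Nat.cast : ℕ → ℝ) spec
    have hprodpos : (0:ℝ) < ((∏ i, Nat.factorial (ν i) : ℕ):ℝ) := by
      exact_mod_cast Finset.prod_pos fun i _ => Nat.factorial_pos _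
    have : (M:ℝ) = ((Nat.factorial n : ℕ):ℝ) / ((∏ i, Nat.factorial (ν i) : ℕ):ℝ) := by
      field_simp at spec' ⊢
      linarith [spec']
    rw [this, Real.log_div (by positivity : ((Nat.factorial n : ℕ):ℝ) ≠ 0) hprodpos.ne']
    congr 1
    rw [Nat.cast_prod, Real.log_prod (fun i _ => by
      have := Nat.factorial_pos (ν i); positivity)]
    symm
    apply Finset.sum_filter_of_ne
    intro x _ hx h0
    apply hx
    rw [h0]
    simp [Nat.factorial]
  set T : ℝ := ∑ i ∈ supp, (((ν i:ℝ)+1/2) * Real.log (ν i) - (ν i:ℝ) + L) with hTdef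
  have hsupp_sum_cast : ∑ i ∈ supp, (ν i : ℝ) = (n:ℝ) := by exact_mod_cast hsupp_sum
  have hkk : ((supp.card : ℕ) : ℝ) = (k:ℝ) := rfl
  have hn1' : (1:ℝ) ≤ (n:ℝ) := by exact_mod_cast hn1
  have hident : ((n:ℝ)+1/2) * Real.log n - (n:ℝ) + L - T = Real.log S + G := by
    have hsplit : ∀ i ∈ supp, ((ν i:ℝ)+1/2) * Real.log (ν i) - (ν i:ℝ) + L
        = ((ν i:ℝ) * Real.log (ν i) + (1/2) * Real.log (ν i)) + (L - (ν i:ℝ)) := fun i _ => by ring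
    rw [hTdef, Finset.sum_congr rfl hsplit, Finset.sum_add_distrib, Finset.sum_add_distrib,
      ← Finset.mul_sum, Finset.sum_sub_distrib, Finset.sum_const, nsmul_eq_mul,
      hsupp_sum_cast, hlogS, hGval, hkk, hLval]
    ring
  have hup : Real.log (M:ℝ) ≤ Real.log S + G
      + (1/(12*(n:ℝ)) - ∑ i ∈ supp, 1/(12*(ν i:ℝ)+1)) := by
    have h1 := (dSeq_bounds hn1).2
    simp only [dSeq] at h1; rw [← hLdef] at h1
    have h2 : ∀ i ∈ supp, (((ν i:ℝ)+1/2)*Real.log (ν i) - (ν i:ℝ) + L) + 1/(12*(ν i:ℝ)+1)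
        ≤ Real.log (Nat.factorial (ν i)) := by
      intro i hi
      have h3 := (dSeq_bounds (hνpos i hi)).1
      simp only [dSeq] at h3; rw [← hLdef] at h3
      linarith
    have hsum := Finset.sum_le_sum h2
    rw [Finset.sum_add_distrib, ← hTdef] at hsum
    rw [hlogM, ← hident]
    linarith
  have hlow : Real.log S + G - (k:ℝ)/12 ≤ Real.log (M:ℝ) := by
    have h1 := (dSeq_bounds hn1).1
    simp only [dSeq] at h1; rw [← hLdef] at h1
    have h2 : ∀ i ∈ supp, Real.log (Nat.factorial (ν i))
        ≤ (((ν i:ℝ)+1/2)*Real.log (ν i) - (ν i:ℝ) + L) + 1/12 := by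
      intro i hi
      have h3 := (dSeq_bounds (hνpos i hi)).2
      simp only [dSeq] at h3; rw [← hLdef] at h3
      have hν1 : (1:ℝ) ≤ (ν i:ℝ) := by exact_mod_cast hνpos i hi
      have h4 : 1/(12*(ν i:ℝ)) ≤ 1/12 := by
        apply one_div_le_one_div_of_le (by norm_num)
        linarith
      linarith
    have hsum := Finset.sum_le_sum h2
    rw [Finset.sum_add_distrib, ← hTdef, Finset.sum_const, nsmul_eq_mul] at hsum
    rw [hlogM, ← hident]
    have h5 : 0 < 1/(12*(n:ℝ)+1) := by positivity
    linarith [hkk]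
  constructor
  · -- lower bound
    have heq : Real.exp (-(k:ℝ)/12) * S * Real.exp G
        = Real.exp (Real.log S + G - (k:ℝ)/12) := by
      rw [show Real.log S + G - (k:ℝ)/12 = -(k:ℝ)/12 + Real.log S + G from by ring,
        Real.exp_add, Real.exp_add, Real.exp_log hS]
    rw [heq]
    calc Real.exp (Real.log S + G - (k:ℝ)/12) ≤ Real.exp (Real.log (M:ℝ)) :=
          Real.exp_le_exp.mpr hlow
      _ = (M:ℝ) := Real.exp_log hM0
  · -- upper bound
    rcases eq_or_lt_of_le hk1 with hk | hk2
    · -- k = 1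
      obtain ⟨i₀, hi₀⟩ := Finset.card_eq_one.mp hk.symm
      have hνi₀ : ν i₀ = n := by
        rw [← hsupp_sum, hi₀, Finset.sum_singleton]
      have hprodn : ∏ i ∈ supp, (ν i : ℝ) = (n:ℝ) := by
        rw [hi₀, Finset.prod_singleton, hνi₀]
      have hMeq : M = 1 := by
        have spec := Nat.multinomial_spec Finset.univ ν
        have hprodfac : (∏ i, Nat.factorial (ν i)) = Nat.factorial n := by
          rw [show (Finset.univ : Finset (Fin m)) = Finset.univ from rfl]
          rw [← Finset.prod_filter_of_ne (p := fun i => ν i ≠ 0)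
            (fun x _ hx h0 => hx (by rw [h0]; rfl))]
          rw [show Finset.univ.filter (fun i => ν i ≠ 0) = supp from rfl, hi₀,
            Finset.prod_singleton, hνi₀]
        rw [hprodfac, ← hn] at spec
        have hpos := Nat.factorial_pos n
        rw [hMdef]
        exact Nat.eq_of_mul_eq_mul_left hpos (by rw [mul_one]; exact spec)
      have hSeq : S = 1 := by
        rw [show S = Real.sqrt n /
          ((2 * Real.pi) ^ (((k : ℝ) - 1) / 2) * Real.sqrt (∏ i ∈ supp, (ν i : ℝ))) from rfl]
        rw [hprodn, show ((k:ℝ) - 1)/2 = 0 by rw [← hk]; norm_num, Real.rpow_zero, one_mul,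
          div_self (Real.sqrt_pos.mpr hn0).ne']
      have hGeq : G = 0 := by
        rw [hGval, hi₀, Finset.sum_singleton, hνi₀]
        ring
      rw [hMeq, hSeq, hGeq]
      simp
    · -- k ≥ 2
      have hεup : 1/(12*(n:ℝ)) - ∑ i ∈ supp, 1/(12*(ν i:ℝ)+1) ≤ 0 := by
        have hterm : ∀ i ∈ supp, 1/(12*(n:ℝ)+1) ≤ 1/(12*(ν i:ℝ)+1) := by
          intro i hi
          apply one_div_le_one_div_of_le (by positivity)
          have : (ν i:ℝ) ≤ (n:ℝ) := by exact_mod_cast hνle i hi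
          linarith
        have hsum := Finset.sum_le_sum hterm
        rw [Finset.sum_const, nsmul_eq_mul] at hsum
        have hk2' : (2:ℝ) ≤ ((supp.card : ℕ):ℝ) := by
          rw [hkk]; exact_mod_cast hk2
        have h12 : 1/(12*(n:ℝ)) ≤ 2/(12*(n:ℝ)+1) := by
          rw [div_le_div_iff₀ (by positivity) (by positivity)]
          nlinarith
        have hpos : (0:ℝ) < 1/(12*(n:ℝ)+1) := by positivity
        have h2c : 2 * (1/(12*(n:ℝ)+1)) ≤ ((supp.card : ℕ):ℝ) * (1/(12*(n:ℝ)+1)) :=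
          mul_le_mul_of_nonneg_right hk2' hpos.le
        have h12' : (2:ℝ)/(12*(n:ℝ)+1) = 2 * (1/(12*(n:ℝ)+1)) := by ring
        linarith
      have hup' : Real.log (M:ℝ) ≤ Real.log S + G := by linarith
      calc (M:ℝ) = Real.exp (Real.log (M:ℝ)) := (Real.exp_log hM0).symm
        _ ≤ Real.exp (Real.log S + G) := Real.exp_le_exp.mpr hup'
        _ = S * Real.exp G := by rw [Real.exp_add, Real.exp_log hS]
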